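/- Let N ≥ 1, let a_0, a_1, …, a_N be nonnegative real numbers with a_0 ≤ 1, and let b_1, …, b_N be positive real numbers. Suppose a_n ≤ a_{n-1}(1 − b_n a_{n-1}) for every 1 ≤ n ≤ N. Then a_N ≤ 1 / (1 + b_1 + ⋯ + b_N). -/

import Mathlib

open scoped BigOperators ENNReal NNReal
open Metric Set MeasureTheory

noncomputable section

/-- Closed symmetric convex hull of `K`. -/
def symConvHull {X : Type*} [NormedAddCommGroup X] [NormedSpace ℝ X] (K : Set X) : Set X :=
  closure (convexHull ℝ (K ∪ -K))

/-- Entropy numbers: minimal radius so that `A` is covered by `2^n` balls. -/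
def entropyNum {X : Type*} [NormedAddCommGroup X] (n : ℕ) (A : Set X) : ℝ :=
  sInf {ε : ℝ | 0 < ε ∧ ∃ C : Finset X, C.card ≤ 2 ^ n ∧ A ⊆ ⋃ c ∈ C, Metric.closedBall c ε}

/-- `δ_{X,n}`: supremum over all `n`-dimensional subspaces of `X` of the Banach–Mazur
distance to `ℓ₂ⁿ`. -/
def deltaBM (X : Type*) [NormedAddCommGroup X] [NormedSpace ℝ X] (n : ℕ) : ℝ :=
  ⨆ Y : {Y : Submodule ℝ X // Module.finrank ℝ Y = n},
    ⨅ T : (Y.1 ≃L[ℝ] EuclideanSpace ℝ (Fin n)),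
      ‖T.toContinuousLinearMap‖ * ‖T.symm.toContinuousLinearMap‖

/-- Volume of the unit Euclidean ball in `ℝⁿ`. -/
def volBall (n : ℕ) : ℝ := Real.pi ^ ((n : ℝ) / 2) / Real.Gamma ((n : ℝ) / 2 + 1)

/-- Modulus of smoothness of a normed space `X`. -/
def modSmooth (X : Type*) [NormedAddCommGroup X] (t : ℝ) : ℝ :=
  sSup {r : ℝ | ∃ x y : X, ‖x‖ = 1 ∧ ‖y‖ = t ∧ r = ‖x + y‖ / 2 + ‖x - y‖ / 2 - 1}

/-- The set of ℓ¹-costs of expansions `f = Σ aᵢ gᵢ` with `gᵢ ∈ K`;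
its infimum is `‖f‖_{L1(K)}`. -/
def expanSums {X : Type*} [NormedAddCommGroup X] [NormedSpace ℝ X] (K : Set X) (f : X) :
    Set ℝ :=
  {c | ∃ (a : ℕ → ℝ) (g : ℕ → X), (∀ i, g i ∈ K) ∧
    HasSum (fun i => a i • g i) f ∧ HasSum (fun i => |a i|) c}

/-- The K-functional between `X` and `L1(K)`. -/
def Kfunctional {X : Type*} [NormedAddCommGroup X] [NormedSpace ℝ X] (K : Set X) (t : ℝ)
    (g : X) : ℝ :=
  sInf {r : ℝ | ∃ h : X, (expanSums K h).Nonempty ∧ r = ‖g - h‖ + t * sInf (expanSums K h)}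

/-- The set whose supremum is the interpolation norm `‖g‖_θ`. -/
def thetaSet {X : Type*} [NormedAddCommGroup X] [NormedSpace ℝ X] (K : Set X) (θ : ℝ)
    (g : X) : Set ℝ :=
  {r | ∃ t : ℝ, 0 < t ∧ r = t ^ (-θ) * Kfunctional K t g}



lemma key_step (x b D : ℝ) (hx0 : 0 ≤ x) (hxD : D * x ≤ 1) (hD : 1 ≤ D) (hb : 0 < b) :
    x * (1 - b * x) ≤ 1 / (D + b) := by
  rw [le_div_iff₀ (by nlinarith)]
  nlinarith [sq_nonneg (D*x - 1), sq_nonneg (2*b*x - 1), sq_nonneg (D*x + b*x - 1),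
    mul_nonneg hx0 hb.le, mul_nonneg (mul_nonneg hx0 hx0) hb.le, sq_nonneg (b*x - 1),
    mul_nonneg (mul_nonneg hx0 hb.le) (sub_nonneg.mpr hD)]

/-- induction lemma for greedy error recursions. -/
theorem stmt_14 (N : ℕ) (hN : 1 ≤ N) (a b : ℕ → ℝ)
    (ha : ∀ n ≤ N, 0 ≤ a n) (ha0 : a 0 ≤ 1)
    (hb : ∀ n, 1 ≤ n → n ≤ N → 0 < b n)
    (hrec : ∀ n, 1 ≤ n → n ≤ N → a n ≤ a (n - 1) * (1 - b n * a (n - 1))) :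
    a N ≤ 1 / (1 + ∑ k ∈ Finset.Icc 1 N, b k) := by
  have main : ∀ n, n ≤ N → a n ≤ 1 / (1 + ∑ k ∈ Finset.Icc 1 n, b k) := by
    intro n
    induction n with
    | zero => intro _; simpa using ha0
    | succ m ih =>
      intro hm
      have hsum : 0 ≤ ∑ k ∈ Finset.Icc 1 m, b k :=
        Finset.sum_nonneg fun k hk => by
          have := Finset.mem_Icc.mp hk
          exact le_of_lt (hb k this.1 (by omega))
      have hD : (1:ℝ) ≤ 1 + ∑ k ∈ Finset.Icc 1 m, b k := by linarith
      have him := ih (by omega)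
      have hrec' := hrec (m+1) (by omega) hm
      simp only [Nat.add_sub_cancel] at hrec'
      have hbm := hb (m+1) (by omega) hm
      have hxD : (1 + ∑ k ∈ Finset.Icc 1 m, b k) * a m ≤ 1 := by
        have h := mul_le_mul_of_nonneg_left him
          (by linarith : (0:ℝ) ≤ 1 + ∑ k ∈ Finset.Icc 1 m, b k)
        rwa [mul_one_div, div_self (by linarith)] at h
      have := key_step (a m) (b (m+1)) (1 + ∑ k ∈ Finset.Icc 1 m, b k)
        (ha m (by omega)) hxD hD hbm
      rw [Finset.sum_Icc_succ_top (by omega : 1 ≤ m+1)]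
      calc a (m+1) ≤ a m * (1 - b (m+1) * a m) := hrec'
        _ ≤ 1 / ((1 + ∑ k ∈ Finset.Icc 1 m, b k) + b (m+1)) := this
        _ = 1 / (1 + (∑ k ∈ Finset.Icc 1 m, b k + b (m+1))) := by ring_nf
  exact main N le_rfl

end
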